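/- arXiv:2508.12048 — 3 statements merged into one kernel-verified Lean document; each statement's English description precedes it below -/
import Mathlib

section
/- Let Q(u) = 2√(F⁻¹(u)) · exp(−F⁻¹(u)/2) / (√(2π) u) for u ∈ (0,1), where F⁻¹ is the quantile function of the chi-squared distribution with one degree of freedom. Then Q is continuous and strictly decreasing on (0,1), with lim_{u→0⁺} Q(u) = 1 and lim_{u→1⁻} Q(u) = 0. -/
open Real MeasureTheory ProbabilityTheory Set Filter

/-- CDF of the chi-squared distribution with one degree of freedom. -/
noncomputable def chiSq1CDF : ℝ → ℝ :=
  fun z => ((gaussianReal 0 1) {x : ℝ | x ^ 2 ≤ z}).toReal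

/-- Quantile function of the χ²₁ distribution. -/
noncomputable def chiSq1Quantile : ℝ → ℝ :=
  fun u => sInf {z : ℝ | u ≤ chiSq1CDF z}

/-- The function Q of the paper. -/
noncomputable def Qfun : ℝ → ℝ :=
  fun u => 2 * Real.sqrt (chiSq1Quantile u) * Real.exp (-(chiSq1Quantile u) / 2) /
    (Real.sqrt (2 * π) * u)

noncomputable def phi : ℝ → ℝ := fun x => (Real.sqrt (2 * π))⁻¹ * Real.exp (-x ^ 2 / 2)

lemma phi_eq : gaussianPDFReal 0 1 = phi := by
  funext x
  simp [gaussianPDFReal, phi]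

lemma phi_pos (x : ℝ) : 0 < phi x := by
  have h : (0:ℝ) < Real.sqrt (2 * π) := Real.sqrt_pos.2 (by positivity)
  exact mul_pos (inv_pos.2 h) (Real.exp_pos _)

lemma phi_cont : Continuous phi := by
  unfold phi
  fun_prop

lemma phi_even (x : ℝ) : phi (-x) = phi x := by simp [phi]

lemma phi_integrable : Integrable phi := phi_eq ▸ integrable_gaussianPDFReal 0 1

lemma phi_integral : ∫ x, phi x = 1 := phi_eq ▸ integral_gaussianPDFReal_eq_one 0 one_ne_zero

noncomputable def Gfun : ℝ → ℝ := fun t => ∫ x in (-t)..t, phi x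

lemma hasDerivAt_G (t : ℝ) : HasDerivAt Gfun (2 * phi t) t := by
  have h1 : HasDerivAt (fun u => ∫ x in (0:ℝ)..u, phi x) (phi t) t :=
    (phi_cont.integral_hasStrictDerivAt 0 t).hasDerivAt
  have h2 : HasDerivAt (fun u => ∫ x in (0:ℝ)..(-u), phi x) (-phi t) t := by
    have := ((phi_cont.integral_hasStrictDerivAt 0 (-t)).hasDerivAt).comp t (hasDerivAt_neg t)
    simpa [phi_even, Function.comp_def] using this
  have h : HasDerivAt (fun u => (∫ x in (0:ℝ)..u, phi x) - ∫ x in (0:ℝ)..(-u), phi x) (phi t - -phi t) t := h1.sub h2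
  have heq : (fun u => (∫ x in (0:ℝ)..u, phi x) - ∫ x in (0:ℝ)..(-u), phi x) = Gfun := by
    funext u
    have h3 : (∫ x in (-u)..(0:ℝ), phi x) + ∫ x in (0:ℝ)..u, phi x = ∫ x in (-u)..u, phi x :=
      intervalIntegral.integral_add_adjacent_intervals (phi_cont.intervalIntegrable _ _)
        (phi_cont.intervalIntegrable _ _)
    have h4 : ∫ x in (-u)..(0:ℝ), phi x = - ∫ x in (0:ℝ)..(-u), phi x :=
      intervalIntegral.integral_symm _ _
    show (∫ x in (0:ℝ)..u, phi x) - ∫ x in (0:ℝ)..(-u), phi x = ∫ x in (-u)..u, phi x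
    linarith
  rw [heq] at h
  convert h using 1; ring

lemma G_cont : Continuous Gfun := (fun t => (hasDerivAt_G t).continuousAt) |> continuous_iff_continuousAt.2

lemma G_strictMono : StrictMono Gfun :=
  strictMono_of_deriv_pos (fun t => by
    rw [(hasDerivAt_G t).deriv]; have := phi_pos t; linarith)

lemma G_zero : Gfun 0 = 0 := by simp [Gfun]

lemma G_tendsto_one : Tendsto Gfun atTop (nhds 1) := by
  have h := intervalIntegral_tendsto_integral (μ := volume) (l := atTop)
    (a := fun t : ℝ => -t) (b := fun t : ℝ => t) phi_integrable tendsto_neg_atTop_atBot tendsto_id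
  rw [phi_integral] at h
  exact h

lemma G_lt_one (t : ℝ) : Gfun t < 1 := by
  have h1 : Gfun t < Gfun (t + 1) := G_strictMono (by linarith)
  have h2 : Gfun (t + 1) ≤ 1 :=
    ge_of_tendsto G_tendsto_one (eventually_atTop.2 ⟨t + 1, fun s hs => G_strictMono.monotone hs⟩)
  linarith

lemma G_pos {t : ℝ} (ht : 0 < t) : 0 < Gfun t := by
  have := G_strictMono ht; rwa [G_zero] at this

lemma cdf_eq (z : ℝ) : chiSq1CDF z = Gfun (Real.sqrt z) := by
  rcases lt_or_ge z 0 with hz | hz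
  · have h1 : {x : ℝ | x ^ 2 ≤ z} = ∅ := by
      ext x; simp only [mem_setOf_eq, mem_empty_iff_false, iff_false, not_le]
      exact lt_of_lt_of_le hz (sq_nonneg x)
    rw [chiSq1CDF, h1, Real.sqrt_eq_zero_of_nonpos hz.le, G_zero]
    simp
  · have h1 : {x : ℝ | x ^ 2 ≤ z} = Icc (-Real.sqrt z) (Real.sqrt z) := by
      ext x
      simp only [mem_setOf_eq, mem_Icc, ← abs_le, ← Real.sqrt_sq_eq_abs,
        Real.sqrt_le_sqrt_iff hz]
    rw [chiSq1CDF, h1, gaussianReal_apply_eq_integral 0 one_ne_zero, phi_eq,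
      ENNReal.toReal_ofReal (setIntegral_nonneg measurableSet_Icc fun x _ => (phi_pos x).le)]
    rw [Gfun, intervalIntegral.integral_of_le (neg_le_self (Real.sqrt_nonneg z)),
      ← integral_Icc_eq_integral_Ioc]

lemma quantile_eq {u t : ℝ} (hu : u ∈ Ioo (0:ℝ) 1) (ht : 0 < t) (hGt : Gfun t = u) :
    chiSq1Quantile u = t ^ 2 := by
  have hset : {z : ℝ | u ≤ chiSq1CDF z} = Ici (t ^ 2) := by
    ext z
    simp only [mem_setOf_eq, mem_Ici, cdf_eq, ← hGt, G_strictMono.le_iff_le]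
    rcases le_or_gt 0 z with hz | hz
    · rw [Real.le_sqrt ht.le hz]
    · constructor
      · intro h
        rw [Real.sqrt_eq_zero_of_nonpos hz.le] at h
        linarith
      · intro h
        nlinarith [sq_nonneg t]
  rw [chiSq1Quantile, hset, csInf_Ici]

lemma exists_G_eq {u : ℝ} (hu : u ∈ Ioo (0:ℝ) 1) : ∃ t, 0 < t ∧ Gfun t = u := by
  obtain ⟨hu0, hu1⟩ := hu
  obtain ⟨T, hT⟩ := (G_tendsto_one.eventually (eventually_gt_nhds hu1)).exists
  have h0 : Gfun 0 < u := by rw [G_zero]; exact hu0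
  obtain ⟨t, ht, hGt⟩ := intermediate_value_Ioo (le_of_lt (by
      by_contra hc
      push_neg at hc
      exact absurd (G_strictMono.monotone hc) (by rw [not_le]; exact h0.trans hT)))
    G_cont.continuousOn (⟨h0, hT⟩ : u ∈ Ioo (Gfun 0) (Gfun T))
  exact ⟨t, ht.1, hGt⟩

noncomputable def sfun : ℝ → ℝ := fun u => Real.sqrt (chiSq1Quantile u)

lemma sfun_spec {u : ℝ} (hu : u ∈ Ioo (0:ℝ) 1) : 0 < sfun u ∧ Gfun (sfun u) = u := by
  obtain ⟨t, ht, hGt⟩ := exists_G_eq hu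
  have hq : chiSq1Quantile u = t ^ 2 := quantile_eq hu ht hGt
  have hs : sfun u = t := by rw [sfun, hq, Real.sqrt_sq ht.le]
  rw [hs]
  exact ⟨ht, hGt⟩

lemma sfun_strictMono : StrictMonoOn sfun (Ioo (0:ℝ) 1) := by
  intro u hu v hv huv
  have hsu := sfun_spec hu
  have hsv := sfun_spec hv
  by_contra hc
  push_neg at hc
  have := G_strictMono.monotone hc
  rw [hsu.2, hsv.2] at this
  linarith

lemma sfun_image : sfun '' Ioo (0:ℝ) 1 = Ioi 0 := by
  ext t
  constructor
  · rintro ⟨u, hu, rfl⟩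
    exact (sfun_spec hu).1
  · intro ht
    refine ⟨Gfun t, ⟨G_pos ht, G_lt_one t⟩, ?_⟩
    have hq : chiSq1Quantile (Gfun t) = t ^ 2 := quantile_eq ⟨G_pos ht, G_lt_one t⟩ ht rfl
    rw [sfun, hq, Real.sqrt_sq (le_of_lt ht)]

lemma sfun_contOn : ContinuousOn sfun (Ioo (0:ℝ) 1) := by
  intro u hu
  refine (sfun_strictMono.continuousAt_of_image_mem_nhds
    (isOpen_Ioo.mem_nhds hu) ?_).continuousWithinAt
  rw [sfun_image]
  exact isOpen_Ioi.mem_nhds (sfun_spec hu).1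

lemma sfun_tendsto_zero : Tendsto sfun (nhdsWithin 0 (Ioi 0)) (nhdsWithin 0 (Ioi 0)) := by
  have hmem : Ioo (0:ℝ) 1 ∈ nhdsWithin (0:ℝ) (Ioi 0) := by
    rw [← Ioi_inter_Iio]
    exact inter_mem self_mem_nhdsWithin
      (mem_nhdsWithin_of_mem_nhds (isOpen_Iio.mem_nhds (by norm_num)))
  rw [tendsto_nhdsWithin_iff]
  refine ⟨?_, ?_⟩
  · rw [tendsto_order]
    constructor
    · intro c hc
      filter_upwards [hmem] with u hu
      exact lt_trans hc (sfun_spec hu).1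
    · intro ε hε
      have hG : Iio (Gfun ε) ∈ nhdsWithin (0:ℝ) (Ioi 0) :=
        mem_nhdsWithin_of_mem_nhds (isOpen_Iio.mem_nhds (G_pos hε))
      filter_upwards [hmem, hG] with u hu hult
      have hs := sfun_spec hu
      have h2 : Gfun (sfun u) < Gfun ε := by rw [hs.2]; exact hult
      exact G_strictMono.lt_iff_lt.1 h2
  · filter_upwards [hmem] with u hu
    exact (sfun_spec hu).1

lemma sfun_tendsto_atTop : Tendsto sfun (nhdsWithin 1 (Iio 1)) atTop := by
  have hmem : Ioo (0:ℝ) 1 ∈ nhdsWithin (1:ℝ) (Iio 1) := by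
    rw [← Ioi_inter_Iio]
    exact inter_mem (mem_nhdsWithin_of_mem_nhds (isOpen_Ioi.mem_nhds (by norm_num)))
      self_mem_nhdsWithin
  rw [tendsto_atTop]
  intro M
  have hb : (0:ℝ) < max M 1 := lt_of_lt_of_le one_pos (le_max_right _ _)
  have hG : Ioi (Gfun (max M 1)) ∈ nhdsWithin (1:ℝ) (Iio 1) :=
    mem_nhdsWithin_of_mem_nhds (isOpen_Ioi.mem_nhds (G_lt_one _))
  filter_upwards [hmem, hG] with u hu hgt
  have hs := sfun_spec hu
  have h2 : Gfun (max M 1) < Gfun (sfun u) := by rw [hs.2]; exact hgt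
  have := G_strictMono.lt_iff_lt.1 h2
  exact le_of_lt (lt_of_le_of_lt (le_max_left _ _) this)

noncomputable def gfun : ℝ → ℝ := fun t => 2 * t * phi t / Gfun t

lemma Qfun_eq {u : ℝ} (hu : u ∈ Ioo (0:ℝ) 1) : Qfun u = gfun (sfun u) := by
  obtain ⟨t, ht, hGt⟩ := exists_G_eq hu
  have hq : chiSq1Quantile u = t ^ 2 := quantile_eq hu ht hGt
  have hs : sfun u = t := by rw [sfun, hq, Real.sqrt_sq ht.le]
  have hsq : Real.sqrt (chiSq1Quantile u) = t := hs
  have hπ : Real.sqrt (2 * π) ≠ 0 := by positivity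
  have hu0 : u ≠ 0 := ne_of_gt hu.1
  rw [Qfun, gfun, hs, hsq, hq, hGt, phi]
  rw [show -(t ^ 2) / 2 = -t ^ 2 / 2 by ring]
  field_simp

lemma hasDerivAt_phi (t : ℝ) : HasDerivAt phi (-t * phi t) t := by
  have h1 : HasDerivAt (fun x : ℝ => -x ^ 2 / 2) (-t) t := by
    have := ((hasDerivAt_pow 2 t).neg).div_const 2
    refine this.congr_deriv ?_
    push_cast
    ring
  have h2 := (h1.exp).const_mul (Real.sqrt (2 * π))⁻¹
  refine h2.congr_deriv ?_
  rw [phi]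
  ring

lemma hasDerivAt_h (t : ℝ) :
    HasDerivAt (fun t => (1 - t ^ 2) * Gfun t - 2 * t * phi t)
      (-2 * t * Gfun t) t := by
  have h1 : HasDerivAt (fun t : ℝ => 1 - t ^ 2) (-(2 * t)) t := by
    have := (hasDerivAt_pow 2 t).const_sub 1
    refine this.congr_deriv ?_
    push_cast
    ring
  have h2 := (h1.mul (hasDerivAt_G t)).sub
    (((hasDerivAt_id t).const_mul 2).mul (hasDerivAt_phi t))
  refine h2.congr_deriv ?_
  simp only [id_eq, pow_one]
  ring

lemma h_neg {t : ℝ} (ht : 0 < t) : (1 - t ^ 2) * Gfun t - 2 * t * phi t < 0 := by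
  have hanti : StrictAntiOn (fun t => (1 - t ^ 2) * Gfun t - 2 * t * phi t) (Ici 0) := by
    apply strictAntiOn_of_deriv_neg (convex_Ici 0)
    · exact fun x _ => (hasDerivAt_h x).continuousAt.continuousWithinAt
    · intro x hx
      rw [interior_Ici] at hx
      rw [(hasDerivAt_h x).deriv]
      have := mul_pos (mem_Ioi.1 hx) (G_pos hx)
      nlinarith
  have := hanti (self_mem_Ici) (mem_Ici.2 ht.le) ht
  simpa [G_zero] using this

lemma hasDerivAt_num (t : ℝ) : HasDerivAt (fun t => 2 * t * phi t) (2 * phi t * (1 - t ^ 2)) t := by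
  have h := ((hasDerivAt_id t).const_mul 2).mul (hasDerivAt_phi t)
  refine h.congr_deriv ?_
  simp only [id_eq]
  ring

lemma hasDerivAt_gfun {t : ℝ} (ht : 0 < t) :
    HasDerivAt gfun ((2 * phi t * (1 - t ^ 2) * Gfun t - 2 * t * phi t * (2 * phi t)) /
      (Gfun t) ^ 2) t :=
  (hasDerivAt_num t).div (hasDerivAt_G t) (G_pos ht).ne'

lemma deriv_gfun_neg {t : ℝ} (ht : 0 < t) : deriv gfun t < 0 := by
  rw [(hasDerivAt_gfun ht).deriv]
  apply div_neg_of_neg_of_pos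
  · have h1 := h_neg ht
    have h2 := phi_pos t
    nlinarith
  · exact pow_pos (G_pos ht) 2

lemma gfun_anti : StrictAntiOn gfun (Ioi (0:ℝ)) := by
  apply strictAntiOn_of_deriv_neg (convex_Ioi 0)
  · exact fun x hx => (hasDerivAt_gfun (mem_Ioi.1 hx)).continuousAt.continuousWithinAt
  · intro x hx
    rw [interior_Ioi] at hx
    exact deriv_gfun_neg (mem_Ioi.1 hx)

lemma gfun_contOn : ContinuousOn gfun (Ioi (0:ℝ)) :=
  fun x hx => (hasDerivAt_gfun (mem_Ioi.1 hx)).continuousAt.continuousWithinAt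

lemma gfun_tendsto_one : Tendsto gfun (nhdsWithin 0 (Ioi 0)) (nhds 1) := by
  have hslope : Tendsto (fun t => Gfun t / t) (nhdsWithin 0 (Ioi 0)) (nhds (2 * phi 0)) := by
    have h := hasDerivAt_iff_tendsto_slope.1 (hasDerivAt_G 0)
    have h2 : Tendsto (slope Gfun 0) (nhdsWithin 0 (Ioi 0)) (nhds (2 * phi 0)) :=
      h.mono_left (nhdsWithin_mono 0 (fun x hx => ne_of_gt hx))
    refine h2.congr' ?_
    filter_upwards [self_mem_nhdsWithin] with t ht
    rw [slope_def_field, G_zero]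
    simp
  have hphi : Tendsto (fun t => 2 * phi t) (nhdsWithin 0 (Ioi 0)) (nhds (2 * phi 0)) :=
    ((phi_cont.tendsto 0).const_mul 2).mono_left nhdsWithin_le_nhds
  have hne : (2 * phi 0) ≠ 0 := by have := phi_pos 0; positivity
  have h := hphi.mul (hslope.inv₀ hne)
  rw [mul_inv_cancel₀ hne] at h
  refine h.congr' ?_
  filter_upwards [self_mem_nhdsWithin] with t ht
  have ht0 : t ≠ 0 := ne_of_gt ht
  have hG : Gfun t ≠ 0 := (G_pos ht).ne'
  rw [gfun]
  field_simp

lemma aux_tendsto : Tendsto (fun t : ℝ => t * Real.exp (-t ^ 2 / 2)) atTop (nhds 0) := by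
  have h1 : Tendsto (fun t : ℝ => 2 * ((t / 2) ^ 1 * Real.exp (-(t / 2)))) atTop (nhds (2 * 0)) := by
    refine Tendsto.const_mul 2 ?_
    exact (tendsto_pow_mul_exp_neg_atTop_nhds_zero 1).comp
      (tendsto_id.atTop_div_const two_pos)
  rw [mul_zero] at h1
  apply tendsto_of_tendsto_of_tendsto_of_le_of_le' tendsto_const_nhds h1
  · filter_upwards [eventually_ge_atTop (0:ℝ)] with t ht
    positivity
  · filter_upwards [eventually_ge_atTop (1:ℝ)] with t ht
    have h2 : -t ^ 2 / 2 ≤ -(t / 2) := by nlinarith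
    have := Real.exp_le_exp.2 h2
    have ht0 : (0:ℝ) ≤ t := by linarith
    calc t * Real.exp (-t ^ 2 / 2) ≤ t * Real.exp (-(t / 2)) := by
          exact mul_le_mul_of_nonneg_left this ht0
      _ = 2 * ((t / 2) ^ 1 * Real.exp (-(t / 2))) := by ring

lemma gfun_tendsto_zero : Tendsto gfun atTop (nhds 0) := by
  have hnum : Tendsto (fun t => 2 * t * phi t) atTop (nhds 0) := by
    have h := aux_tendsto.const_mul (2 * (Real.sqrt (2 * π))⁻¹)
    rw [mul_zero] at h
    refine h.congr ?_
    intro t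
    rw [phi]
    ring
  have h := hnum.mul (G_tendsto_one.inv₀ one_ne_zero)
  rw [zero_mul] at h
  refine h.congr ?_
  intro t
  rw [gfun, div_eq_mul_inv]

lemma sfun_mapsTo : MapsTo sfun (Ioo (0:ℝ) 1) (Ioi (0:ℝ)) :=
  fun u hu => (sfun_spec hu).1

/-- Q is continuous, strictly decreasing on (0,1), with limits 1 at 0⁺ and 0 at 1⁻. -/
theorem Qfun_properties :
    ContinuousOn Qfun (Ioo (0:ℝ) 1) ∧ StrictAntiOn Qfun (Ioo (0:ℝ) 1) ∧
      Tendsto Qfun (nhdsWithin 0 (Ioi 0)) (nhds 1) ∧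
      Tendsto Qfun (nhdsWithin 1 (Iio 1)) (nhds 0) := by
  have hmem0 : Ioo (0:ℝ) 1 ∈ nhdsWithin (0:ℝ) (Ioi 0) := by
    rw [← Ioi_inter_Iio]
    exact inter_mem self_mem_nhdsWithin
      (mem_nhdsWithin_of_mem_nhds (isOpen_Iio.mem_nhds (by norm_num)))
  have hmem1 : Ioo (0:ℝ) 1 ∈ nhdsWithin (1:ℝ) (Iio 1) := by
    rw [← Ioi_inter_Iio]
    exact inter_mem (mem_nhdsWithin_of_mem_nhds (isOpen_Ioi.mem_nhds (by norm_num)))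
      self_mem_nhdsWithin
  refine ⟨?_, ?_, ?_, ?_⟩
  · exact (gfun_contOn.comp sfun_contOn sfun_mapsTo).congr (fun u hu => Qfun_eq hu)
  · intro u hu v hv huv
    rw [Qfun_eq hu, Qfun_eq hv]
    exact gfun_anti (sfun_mapsTo hu) (sfun_mapsTo hv) (sfun_strictMono hu hv huv)
  · refine (gfun_tendsto_one.comp sfun_tendsto_zero).congr' ?_
    filter_upwards [hmem0] with u hu
    exact (Qfun_eq hu).symm
  · refine ((gfun_tendsto_zero.comp sfun_tendsto_atTop)).congr' ?_
    filter_upwards [hmem1] with u hu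
    exact (Qfun_eq hu).symm
end

section
/- If U is uniform on (0, b) with 0 < b < 1 and F⁻¹ is the χ²₁ quantile function, then the random variable X = F⁻¹(U) satisfies E[X] = 1 − 2√(F⁻¹(b))·exp(−F⁻¹(b)/2)/(√(2π) b). -/
open Real MeasureTheory ProbabilityTheory Set

noncomputable def myPsi : ℝ → ℝ :=
  fun t => (2 / Real.sqrt (2 * π)) * ∫ u in (0:ℝ)..t, Real.exp (-u^2/2)

lemma c_pos : 0 < Real.sqrt (2 * π) := Real.sqrt_pos.mpr (by positivity)

lemma cont_integrand : Continuous (fun u : ℝ => Real.exp (-u^2/2)) := by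
  continuity

lemma myPsi_hasDeriv (t : ℝ) :
    HasDerivAt myPsi ((2 / Real.sqrt (2 * π)) * Real.exp (-t^2/2)) t := by
  have h := intervalIntegral.integral_hasDerivAt_right
    (cont_integrand.intervalIntegrable 0 t)
    (cont_integrand.stronglyMeasurable.stronglyMeasurableAtFilter)
    cont_integrand.continuousAt
  exact h.const_mul _

lemma myPsi_zero : myPsi 0 = 0 := by simp [myPsi]

lemma myPsi_mono : StrictMono myPsi := by
  apply strictMono_of_deriv_pos
  intro x
  rw [(myPsi_hasDeriv x).deriv]
  positivity

lemma myPsi_cont : Continuous myPsi :=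
  continuous_iff_continuousAt.mpr fun x => (myPsi_hasDeriv x).continuousAt

lemma gaussianPDFReal_one (x : ℝ) :
    gaussianPDFReal 0 1 x = (Real.sqrt (2*π))⁻¹ * Real.exp (-x^2/2) := by
  simp [gaussianPDFReal]

lemma chiSq1CDF_eq (z : ℝ) (hz : 0 ≤ z) : chiSq1CDF z = myPsi (Real.sqrt z) := by
  set a := Real.sqrt z with ha
  have ha0 : 0 ≤ a := Real.sqrt_nonneg z
  have hset : {x : ℝ | x ^ 2 ≤ z} = Icc (-a) a := by
    ext x
    simp only [mem_setOf_eq, mem_Icc, ← abs_le, ← Real.sqrt_sq_eq_abs, ha]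
    exact (Real.sqrt_le_sqrt_iff hz).symm
  have hnn : 0 ≤ ∫ x in Icc (-a) a, gaussianPDFReal 0 1 x :=
    setIntegral_nonneg measurableSet_Icc (fun x _ => gaussianPDFReal_nonneg 0 1 x)
  have key : chiSq1CDF z = ∫ x in Icc (-a) a, gaussianPDFReal 0 1 x := by
    simp only [chiSq1CDF, hset]
    rw [gaussianReal_apply_eq_integral 0 one_ne_zero, ENNReal.toReal_ofReal hnn]
  rw [key, integral_Icc_eq_integral_Ioc,
    ← intervalIntegral.integral_of_le (by linarith : -a ≤ a)]
  simp_rw [gaussianPDFReal_one]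
  have hcont : Continuous (fun x : ℝ => (Real.sqrt (2*π))⁻¹ * Real.exp (-x^2/2)) :=
    continuous_const.mul cont_integrand
  have hsplit := (intervalIntegral.integral_add_adjacent_intervals (a := -a) (b := 0) (c := a) (μ := volume)
    (hcont.intervalIntegrable _ _) (hcont.intervalIntegrable _ _)).symm
  have hrefl : (∫ x in (-a)..(0:ℝ), (Real.sqrt (2*π))⁻¹ * Real.exp (-x^2/2))
      = ∫ x in (0:ℝ)..a, (Real.sqrt (2*π))⁻¹ * Real.exp (-x^2/2) := by
    have := intervalIntegral.integral_comp_neg (a := (0:ℝ)) (b := a)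
      (fun x => (Real.sqrt (2*π))⁻¹ * Real.exp (-x^2/2))
    simp only [neg_zero, neg_sq] at this
    exact this.symm
  rw [hsplit, hrefl]
  simp only [myPsi, intervalIntegral.integral_const_mul]
  ring

lemma chiSq1CDF_neg {z : ℝ} (hz : z < 0) : chiSq1CDF z = 0 := by
  have hset : {x : ℝ | x ^ 2 ≤ z} = (∅ : Set ℝ) := by
    ext x
    simp only [mem_setOf_eq, mem_empty_iff_false, iff_false, not_le]
    nlinarith [sq_nonneg x]
  simp [chiSq1CDF, hset]

lemma quantile_zero : chiSq1Quantile 0 = 0 := by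
  have hset : {z : ℝ | (0:ℝ) ≤ chiSq1CDF z} = univ := by
    ext z; simp [chiSq1CDF, ENNReal.toReal_nonneg]
  have hnb : ¬ BddBelow (univ : Set ℝ) := by
    rintro ⟨x, hx⟩
    have := hx (mem_univ (x - 1))
    linarith
  simp only [chiSq1Quantile, hset]
  exact Real.sInf_of_not_bddBelow hnb

lemma quantile_psi {t : ℝ} (ht : 0 < t) : chiSq1Quantile (myPsi t) = t^2 := by
  have hset : {z : ℝ | myPsi t ≤ chiSq1CDF z} = Ici (t^2) := by
    ext z
    simp only [mem_setOf_eq, mem_Ici]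
    constructor
    · intro h
      rcases lt_or_ge z 0 with hz | hz
      · exfalso
        rw [chiSq1CDF_neg hz] at h
        have h2 : myPsi 0 < myPsi t := myPsi_mono ht
        rw [myPsi_zero] at h2; linarith
      · rw [chiSq1CDF_eq z hz, myPsi_mono.le_iff_le] at h
        nlinarith [Real.sq_sqrt hz, Real.sqrt_nonneg z]
    · intro h
      have hz : 0 ≤ z := le_trans (sq_nonneg t) h
      rw [chiSq1CDF_eq z hz, myPsi_mono.le_iff_le]
      exact (Real.le_sqrt ht.le hz).mpr h
  simp only [chiSq1Quantile, hset, csInf_Ici]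

lemma quantile_psi' {t : ℝ} (ht : 0 ≤ t) : chiSq1Quantile (myPsi t) = t^2 := by
  rcases eq_or_lt_of_le ht with h | h
  · rw [← h, myPsi_zero, quantile_zero]; ring
  · exact quantile_psi h

lemma exists_s {b : ℝ} (hb0 : 0 < b) (hb1 : b < 1) : ∃ s : ℝ, 0 < s ∧ myPsi s = b := by
  have heq : (fun x : ℝ => Real.exp (-(1/2 : ℝ) * x ^ 2)) = fun u : ℝ => Real.exp (-u^2/2) := by
    funext x; ring_nf
  have hint : IntegrableOn (fun u : ℝ => Real.exp (-u^2/2)) (Ioi 0) := by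
    have h := integrable_exp_neg_mul_sq (b := (1/2 : ℝ)) (by norm_num)
    rw [heq] at h
    exact h.integrableOn
  have hval : (∫ u in Ioi (0:ℝ), Real.exp (-u^2/2)) = Real.sqrt (2*π) / 2 := by
    rw [← heq]
    rw [integral_gaussian_Ioi]
    rw [show π / (1/2 : ℝ) = 2 * π by ring]
  have hlim : Filter.Tendsto myPsi Filter.atTop (nhds 1) := by
    have h1 : Filter.Tendsto (fun t : ℝ => ∫ u in (0:ℝ)..t, Real.exp (-u^2/2))
        Filter.atTop (nhds (∫ u in Ioi (0:ℝ), Real.exp (-u^2/2))) :=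
      intervalIntegral_tendsto_integral_Ioi 0 hint Filter.tendsto_id
    rw [hval] at h1
    have h2 := h1.const_mul (2 / Real.sqrt (2*π))
    have h3 : (2 / Real.sqrt (2*π)) * (Real.sqrt (2*π) / 2) = 1 := by
      field_simp
    rw [h3] at h2
    exact h2
  obtain ⟨t₁, ht₁b, ht₁0⟩ :=
    ((hlim.eventually (eventually_gt_nhds hb1)).and (Filter.eventually_ge_atTop 0)).exists
  have hIVT := intermediate_value_Icc ht₁0 myPsi_cont.continuousOn
  have hbmem : b ∈ Icc (myPsi 0) (myPsi t₁) := by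
    rw [myPsi_zero]
    exact ⟨hb0.le, ht₁b.le⟩
  obtain ⟨s, hs, hsb⟩ := hIVT hbmem
  refine ⟨s, ?_, hsb⟩
  by_contra h
  push_neg at h
  have : s = 0 := le_antisymm h hs.1
  rw [this, myPsi_zero] at hsb
  linarith

/-- Mean of the left-truncated χ²₁ variable F⁻¹(U), U ∼ Uniform(0,b). -/
theorem truncated_chiSq_mean (b : ℝ) (hb0 : 0 < b) (hb1 : b < 1) :
    (∫ u in (0:ℝ)..b, chiSq1Quantile u) / b =
      1 - 2 * Real.sqrt (chiSq1Quantile b) * Real.exp (-(chiSq1Quantile b) / 2) /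
        (Real.sqrt (2 * π) * b) := by
  obtain ⟨s, hs0, hsb⟩ := exists_s hb0 hb1
  have hcpos := c_pos
  have hqb : chiSq1Quantile b = s^2 := by rw [← hsb]; exact quantile_psi hs0
  -- surjectivity helper
  have hsub : ∀ u ∈ Icc (0:ℝ) b, ∃ t ∈ Icc (0:ℝ) s, myPsi t = u := by
    intro u hu
    have h := intermediate_value_Icc hs0.le myPsi_cont.continuousOn
    have : u ∈ Icc (myPsi 0) (myPsi s) := by rw [myPsi_zero, hsb]; exact hu
    obtain ⟨t, ht, htu⟩ := h this
    exact ⟨t, ht, htu⟩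
  -- monotonicity
  have hqmono : MonotoneOn chiSq1Quantile (Icc 0 b) := by
    intro u hu v hv huv
    obtain ⟨t, ht, rfl⟩ := hsub u hu
    obtain ⟨t', ht', rfl⟩ := hsub v hv
    rw [quantile_psi' ht.1, quantile_psi' ht'.1]
    have htt : t ≤ t' := myPsi_mono.le_iff_le.mp huv
    nlinarith [ht.1, ht'.1]
  -- integrability
  have hqint : IntervalIntegrable chiSq1Quantile volume 0 b := by
    apply MonotoneOn.intervalIntegrable
    rwa [uIcc_of_le hb0.le]
  -- continuity at interior points
  have hcontAt : ∀ u ∈ Ioo (0:ℝ) b, ContinuousAt chiSq1Quantile u := by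
    intro u hu
    apply continuousAt_of_monotoneOn_of_image_mem_nhds hqmono
      (Icc_mem_nhds hu.1 hu.2)
    obtain ⟨t, ht, rfl⟩ := hsub u (Ioo_subset_Icc_self hu)
    rw [quantile_psi' ht.1]
    have ht0 : 0 < t := by
      have := hu.1; rw [← myPsi_zero] at this
      exact myPsi_mono.lt_iff_lt.mp this
    have hts : t < s := by
      have := hu.2; rw [← hsb] at this
      exact myPsi_mono.lt_iff_lt.mp this
    refine Filter.mem_of_superset (Ioo_mem_nhds (by positivity) (by nlinarith)
      : Ioo (0:ℝ) (s^2) ∈ nhds (t^2)) ?_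
    rintro y hy
    have h1 : Real.sqrt y ∈ Icc (0:ℝ) s := by
      constructor
      · exact Real.sqrt_nonneg y
      · rw [← Real.sqrt_sq hs0.le]; exact Real.sqrt_le_sqrt hy.2.le
    refine ⟨myPsi (Real.sqrt y), ⟨?_, ?_⟩, ?_⟩
    · rw [← myPsi_zero]; exact myPsi_mono.le_iff_le.mpr h1.1
    · rw [← hsb]; exact myPsi_mono.le_iff_le.mpr h1.2
    · rw [quantile_psi' h1.1, Real.sq_sqrt hy.1.le]
  -- primitive
  set Q : ℝ → ℝ := fun x => ∫ u in (0:ℝ)..x, chiSq1Quantile u with hQdef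
  have hQcont : ContinuousOn Q (Icc 0 b) := by
    have h := intervalIntegral.continuousOn_primitive_interval' hqint
      (by rw [uIcc_of_le hb0.le]; exact left_mem_Icc.mpr hb0.le)
    rwa [uIcc_of_le hb0.le] at h
  have hmaps : ∀ t ∈ Icc (0:ℝ) s, myPsi t ∈ Icc (0:ℝ) b := by
    intro t ht
    constructor
    · rw [← myPsi_zero]; exact myPsi_mono.le_iff_le.mpr ht.1
    · rw [← hsb]; exact myPsi_mono.le_iff_le.mpr ht.2
  have hRcont : ContinuousOn (Q ∘ myPsi) (Icc 0 s) :=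
    hQcont.comp myPsi_cont.continuousOn hmaps
  -- derivative of R on interior
  set c := Real.sqrt (2*π) with hc
  have hRd : ∀ t ∈ Ioo (0:ℝ) s, HasDerivAt (Q ∘ myPsi)
      (2 / c * t^2 * Real.exp (-t^2/2)) t := by
    intro t ht
    have hmem : myPsi t ∈ Ioo (0:ℝ) b := by
      constructor
      · rw [← myPsi_zero]; exact myPsi_mono ht.1
      · rw [← hsb]; exact myPsi_mono ht.2
    have hQd : HasDerivAt Q (chiSq1Quantile (myPsi t)) (myPsi t) := by
      apply intervalIntegral.integral_hasDerivAt_right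
        (hqint.mono_set ?_) ?_ (hcontAt _ hmem)
      · rw [uIcc_of_le hmem.1.le, uIcc_of_le hb0.le]
        exact Icc_subset_Icc le_rfl hmem.2.le
      · exact ContinuousOn.stronglyMeasurableAtFilter isOpen_Ioo
          (fun x hx => (hcontAt x hx).continuousWithinAt) _ hmem
    have hcomp := hQd.comp t (myPsi_hasDeriv t)
    rw [quantile_psi ht.1] at hcomp
    convert hcomp using 1
    · rfl
    · rfl
    ring
  -- explicit antiderivative
  set W : ℝ → ℝ := fun t => myPsi t - 2 / c * t * Real.exp (-t^2/2) with hWdef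
  have hWd : ∀ t : ℝ, HasDerivAt W (2 / c * t^2 * Real.exp (-t^2/2)) t := by
    intro t
    have he : HasDerivAt (fun t : ℝ => Real.exp (-t^2/2)) (Real.exp (-t^2/2) * (-t)) t := by
      have harg : HasDerivAt (fun t : ℝ => -t^2/2) (-t) t := by
        have h := ((hasDerivAt_pow 2 t).neg).div_const 2
        convert h using 1
        · rfl
        · rfl
        simp; ring
      simpa [mul_comm] using harg.exp
    have h2 : HasDerivAt (fun t : ℝ => 2 / c * t * Real.exp (-t^2/2))
        (2 / c * Real.exp (-t^2/2) + 2 / c * t * (Real.exp (-t^2/2) * (-t))) t := by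
      have h3 := (((hasDerivAt_id t).const_mul (2 / c)).mul he)
      simp only [id_eq, mul_one] at h3
      convert h3 using 1
      · rfl
      · rfl
      · rfl
    have := (myPsi_hasDeriv t).sub h2
    convert this using 1
    · rfl
    · rfl
    · rfl
    rw [hc]; ring
  have hφcont : Continuous (fun t : ℝ => 2 / c * t^2 * Real.exp (-t^2/2)) := by
    have := cont_integrand
    continuity
  have hIW : ∫ t in (0:ℝ)..s, 2 / c * t^2 * Real.exp (-t^2/2) = W s - W 0 :=
    intervalIntegral.integral_eq_sub_of_hasDerivAt (fun t _ => hWd t)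
      (hφcont.intervalIntegrable 0 s)
  have hIR : ∫ t in (0:ℝ)..s, 2 / c * t^2 * Real.exp (-t^2/2)
      = (Q ∘ myPsi) s - (Q ∘ myPsi) 0 := by
    apply intervalIntegral.integral_eq_sub_of_hasDeriv_right
    · rwa [uIcc_of_le hs0.le]
    · intro t ht
      rw [min_eq_left hs0.le, max_eq_right hs0.le] at ht
      exact (hRd t ht).hasDerivWithinAt
    · exact hφcont.intervalIntegrable 0 s
  have hR0 : (Q ∘ myPsi) 0 = 0 := by
    simp [Function.comp, myPsi_zero, hQdef]
  have hW0 : W 0 = 0 := by simp [hWdef, myPsi_zero]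
  have hQb : Q b = b - 2 / c * s * Real.exp (-s^2/2) := by
    have h1 : Q b = (Q ∘ myPsi) s := by simp [Function.comp, hsb]
    have hWs : W s = b - 2 / c * s * Real.exp (-s^2/2) := by
      show myPsi s - 2 / c * s * Real.exp (-s^2/2) = _
      rw [hsb]
    rw [h1, ← sub_zero ((Q ∘ myPsi) s), ← hR0, ← hIR, hIW, hW0, sub_zero, hWs]
  -- final computation
  rw [show (∫ u in (0:ℝ)..b, chiSq1Quantile u) = Q b from rfl, hQb, hqb,
    Real.sqrt_sq hs0.le]
  rw [show -(s^2)/2 = -s^2/2 by ring]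
  field_simp
end

section
/- Let K be a Binomial(n, p) random variable. For every c > 0, P(√(K/n) > √p + √c) < e^{−2cn}. -/
open MeasureTheory

lemma okamoto_aux_log_lb {x : ℝ} (hx : 1 ≤ x) : 2*(x-1)/(x+1) ≤ Real.log x := by
  set f : ℝ → ℝ := fun t => Real.log t - 2*(t-1)/(t+1) with hf
  have hder : ∀ t : ℝ, 0 < t → HasDerivAt f (t⁻¹ - 4/(t+1)^2) t := by
    intro t ht
    have h1 : HasDerivAt (fun t : ℝ => Real.log t) t⁻¹ t := Real.hasDerivAt_log ht.ne'
    have h2 : HasDerivAt (fun t : ℝ => 2*(t-1)/(t+1)) (4/(t+1)^2) t := by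
      have hne : t + 1 ≠ 0 := by linarith
      have hu : HasDerivAt (fun t : ℝ => 2*(t-1)) 2 t := by
        simpa using ((hasDerivAt_id t).sub_const 1).const_mul 2
      have hv : HasDerivAt (fun t : ℝ => t + 1) 1 t := (hasDerivAt_id t).add_const 1
      have := hu.div hv hne
      refine this.congr_deriv ?_
      ring
    exact h1.sub h2
  have hmono : MonotoneOn f (Set.Ici (1:ℝ)) := by
    apply monotoneOn_of_deriv_nonneg (convex_Ici 1)
    · exact fun t ht => ((hder t (by simp at ht; linarith)).continuousAt).continuousWithinAt
    · intro t ht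
      rw [interior_Ici] at ht
      exact ((hder t (by simp at ht; linarith)).differentiableAt).differentiableWithinAt
    · intro t ht
      rw [interior_Ici] at ht
      simp only [Set.mem_Ioi] at ht
      have h0 : (0:ℝ) < t := by linarith
      rw [(hder t h0).deriv]
      rw [sub_nonneg, div_le_iff₀ (by positivity), inv_mul_eq_div, le_div_iff₀ h0]
      nlinarith
  have h0 : f 1 = 0 := by simp [hf]
  have := hmono (Set.mem_Ici.2 le_rfl) (Set.mem_Ici.2 hx) hx
  rw [h0] at this
  simp only [hf] at this
  linarith

lemma okamoto_aux_log_lb2 {y : ℝ} (h0 : 0 < y) (h1 : y ≤ 1) : y/2 - 1/(2*y) ≤ Real.log y := by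
  set f : ℝ → ℝ := fun t => Real.log t - t/2 + 1/(2*t) with hf
  have hder : ∀ t : ℝ, 0 < t → HasDerivAt f (t⁻¹ - 1/2 - 1/(2*t^2)) t := by
    intro t ht
    have h1 : HasDerivAt (fun t : ℝ => Real.log t) t⁻¹ t := Real.hasDerivAt_log ht.ne'
    have h2 : HasDerivAt (fun t : ℝ => t/2) (1/2) t := by
      simpa using (hasDerivAt_id t).div_const 2
    have h3 : HasDerivAt (fun t : ℝ => 1/(2*t)) (-(1/(2*t^2))) t := by
      have hne : 2*t ≠ 0 := by positivity
      have hv : HasDerivAt (fun t : ℝ => 2*t) 2 t := by simpa using (hasDerivAt_id t).const_mul 2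
      have := hv.inv hne
      simp only [one_div]
      refine this.congr_deriv ?_
      field_simp
    have := (h1.sub h2).add h3
    refine this.congr_deriv ?_
    ring
  have hanti : AntitoneOn f (Set.Ioc (0:ℝ) 1) := by
    apply antitoneOn_of_deriv_nonpos (convex_Ioc 0 1)
    · exact fun t ht => ((hder t ht.1).continuousAt).continuousWithinAt
    · intro t ht
      rw [interior_Ioc] at ht
      exact ((hder t ht.1).differentiableAt).differentiableWithinAt
    · intro t ht
      rw [interior_Ioc] at ht
      obtain ⟨ht0, ht1⟩ := ht
      rw [(hder t ht0).deriv]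
      have key : t⁻¹ - 1/2 - 1/(2*t^2) = -((t-1)^2/(2*t^2)) := by
        field_simp
        ring
      rw [key, neg_nonpos]
      positivity
  have hf1 : f 1 = 0 := by norm_num [hf]
  have := hanti (Set.mem_Ioc.2 ⟨h0, h1⟩) (Set.mem_Ioc.2 ⟨zero_lt_one, le_rfl⟩) h1
  rw [hf1] at this
  simp only [hf] at this
  linarith

set_option maxHeartbeats 1000000 in
lemma okamoto_kl {u v : ℝ} (hu : 0 < u) (huv : u < v) (hv : v < 1) :
    2*(v-u)^2 ≤ v^2*(Real.log (v^2) - Real.log (u^2)) +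
      (1-v^2)*(Real.log (1-v^2) - Real.log (1-u^2)) := by
  have hv0 : 0 < v := hu.trans huv
  have hu1 : u < 1 := huv.trans hv
  have h1u2 : 0 < 1 - u^2 := by nlinarith
  have h1v2 : 0 < 1 - v^2 := by nlinarith
  -- h1' : 2*(v-u) ≤ (v+u)*(Real.log v - Real.log u)
  have hx1 : (1:ℝ) ≤ v/u := (one_le_div hu).2 huv.le
  have h1 := okamoto_aux_log_lb hx1
  rw [Real.log_div hv0.ne' hu.ne'] at h1
  have e1 : 2*(v/u-1)/(v/u+1) = 2*(v-u)/(v+u) := by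
    rw [div_eq_div_iff (by positivity) (by positivity)]
    field_simp
  rw [e1] at h1
  have h1' : 2*(v-u) ≤ (v+u)*(Real.log v - Real.log u) := by
    rw [div_le_iff₀ (by positivity)] at h1
    linarith
  -- h2' : (1-v^2)^2 - (1-u^2)^2 ≤ 2*(1-u^2)*(1-v^2)*(Real.log (1-v^2) - Real.log (1-u^2))
  set y : ℝ := (1-v^2)/(1-u^2) with hy
  have hy0 : 0 < y := by positivity
  have hy1 : y ≤ 1 := by
    rw [hy, div_le_one h1u2]; nlinarith
  have h2 := okamoto_aux_log_lb2 hy0 hy1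
  rw [hy, Real.log_div h1v2.ne' h1u2.ne'] at h2
  have h2' : (1-v^2)^2 - (1-u^2)^2 ≤ 2*(1-u^2)*(1-v^2)*(Real.log (1-v^2) - Real.log (1-u^2)) := by
    have e2 : ((1-v^2)/(1-u^2)/2 - 1/(2*((1-v^2)/(1-u^2)))) * (2*(1-u^2)*(1-v^2))
        = (1-v^2)^2 - (1-u^2)^2 := by
      field_simp
    calc (1-v^2)^2 - (1-u^2)^2
        = ((1-v^2)/(1-u^2)/2 - 1/(2*((1-v^2)/(1-u^2)))) * (2*(1-u^2)*(1-v^2)) := e2.symm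
      _ ≤ (Real.log (1-v^2) - Real.log (1-u^2)) * (2*(1-u^2)*(1-v^2)) := by
          apply mul_le_mul_of_nonneg_right _ (by positivity)
          exact h2
      _ = 2*(1-u^2)*(1-v^2)*(Real.log (1-v^2) - Real.log (1-u^2)) := by ring
  -- combine
  have key : (2*(v+u)*(1-u^2)*(1-v^2)) * (v^2*(2*(Real.log v - Real.log u)) + (1-v^2)*(Real.log (1-v^2) - Real.log (1-u^2)) - 2*(v-u)^2)
      = 4*v^2*(1-u^2)*(1-v^2)*((v+u)*(Real.log v - Real.log u) - 2*(v-u))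
        + (v+u)*(1-v^2)*(2*(1-u^2)*(1-v^2)*(Real.log (1-v^2) - Real.log (1-u^2)) - ((1-v^2)^2-(1-u^2)^2))
        + (1-v^2)*(v-u)^2*(2*(v-u)+v^3+3*u*v^2+u^2*v+3*u^3) := by ring
  have hC : 0 < 2*(v+u)*(1-u^2)*(1-v^2) := by positivity
  have hrhs : 0 ≤ (2*(v+u)*(1-u^2)*(1-v^2)) * (v^2*(2*(Real.log v - Real.log u)) + (1-v^2)*(Real.log (1-v^2) - Real.log (1-u^2)) - 2*(v-u)^2) := by
    rw [key]
    have t1 : 0 ≤ 4*v^2*(1-u^2)*(1-v^2)*((v+u)*(Real.log v - Real.log u) - 2*(v-u)) := by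
      apply mul_nonneg (by positivity); linarith
    have t2 : 0 ≤ (v+u)*(1-v^2)*(2*(1-u^2)*(1-v^2)*(Real.log (1-v^2) - Real.log (1-u^2)) - ((1-v^2)^2-(1-u^2)^2)) := by
      apply mul_nonneg (by positivity); linarith
    have t3 : 0 ≤ (1-v^2)*(v-u)^2*(2*(v-u)+v^3+3*u*v^2+u^2*v+3*u^3) := by
      apply mul_nonneg (by positivity)
      nlinarith
    linarith
  have hT : 0 ≤ v^2*(2*(Real.log v - Real.log u)) + (1-v^2)*(Real.log (1-v^2) - Real.log (1-u^2)) - 2*(v-u)^2 :=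
    nonneg_of_mul_nonneg_right hrhs hC
  have hlogv : Real.log (v^2) = 2 * Real.log v := by
    rw [Real.log_pow]; norm_num
  have hlogu : Real.log (u^2) = 2 * Real.log u := by
    rw [Real.log_pow]; norm_num
  rw [hlogv, hlogu]
  nlinarith [hT]

set_option maxHeartbeats 1000000 in
/-- Okamoto's inequality for the square root of a binomial proportion. -/
theorem okamoto_inequality (n : ℕ) (p : ℝ) (hp0 : 0 ≤ p) (hp1 : p ≤ 1)
    (hple : ENNReal.ofReal p ≤ 1)
    (c : ℝ) (hc : 0 < c) :
    (((PMF.binomial (ENNReal.ofReal p).toNNReal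
          (by simpa using ENNReal.toNNReal_mono ENNReal.one_ne_top hple) n).toMeasure
        {k : Fin (n + 1) | Real.sqrt p + Real.sqrt c < Real.sqrt ((k : ℕ) / n)}).toReal) <
      Real.exp (-2 * c * n) := by
  classical
  have hsc : 0 < Real.sqrt c := Real.sqrt_pos.2 hc
  have hsp : 0 ≤ Real.sqrt p := Real.sqrt_nonneg p
  have hv0 : 0 < Real.sqrt p + Real.sqrt c := by linarith
  -- rewrite the measure as a finite sum
  have hM : (((PMF.binomial (ENNReal.ofReal p).toNNReal
          (by simpa using ENNReal.toNNReal_mono ENNReal.one_ne_top hple) n).toMeasure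
        {k : Fin (n + 1) | Real.sqrt p + Real.sqrt c < Real.sqrt ((k : ℕ) / n)}).toReal) =
      ∑ k : Fin (n+1), if Real.sqrt p + Real.sqrt c < Real.sqrt ((k:ℕ) / n)
        then p^(k:ℕ) * (1-p)^(n-(k:ℕ)) * (n.choose (k:ℕ)) else 0 := by
    rw [PMF.toMeasure_apply_fintype]
    rw [ENNReal.toReal_sum (fun a _ => by
      rw [Set.indicator_apply]
      split_ifs
      · exact PMF.apply_ne_top _ _
      · simp)]
    refine Finset.sum_congr rfl (fun k _ => ?_)
    rw [Set.indicator_apply]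
    simp only [Set.mem_setOf_eq]
    split_ifs with hk
    · erw [PMF.binomial_apply]
      rw [ENNReal.coe_toNNReal ENNReal.ofReal_ne_top]
      have h1p : (1 : ENNReal) - ENNReal.ofReal p = ENNReal.ofReal (1 - p) := by
        rw [ENNReal.ofReal_sub 1 hp0, ENNReal.ofReal_one]
      rw [h1p, ENNReal.toReal_mul, ENNReal.toReal_mul, ENNReal.toReal_pow,
        ENNReal.toReal_pow, ENNReal.toReal_ofReal hp0,
        ENNReal.toReal_ofReal (by linarith), Fin.val_last]
      simp
    · simp
  rw [hM]
  have hexppos := Real.exp_pos (-2 * c * (n:ℝ))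
  -- case p = 0
  rcases eq_or_lt_of_le hp0 with hp | hp
  · have : ∀ k : Fin (n+1), (if Real.sqrt p + Real.sqrt c < Real.sqrt ((k:ℕ) / n)
        then p^(k:ℕ) * (1-p)^(n-(k:ℕ)) * (n.choose (k:ℕ)) else 0) = 0 := by
      intro k
      split_ifs with hk
      · have hk0 : (k:ℕ) ≠ 0 := by
          intro h0
          rw [h0] at hk
          simp [← hp, Real.sqrt_zero] at hk
          linarith [hk]
        rw [← hp, zero_pow hk0, zero_mul, zero_mul]
      · rfl
    rw [Finset.sum_eq_zero (fun k _ => this k)]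
    exact hexppos
  -- case √p + √c ≥ 1
  rcases lt_or_ge (Real.sqrt p + Real.sqrt c) 1 with hv1 | hv1
  swap
  · have : ∀ k : Fin (n+1), (if Real.sqrt p + Real.sqrt c < Real.sqrt ((k:ℕ) / n)
        then p^(k:ℕ) * (1-p)^(n-(k:ℕ)) * (n.choose (k:ℕ)) else 0) = 0 := by
      intro k
      rw [if_neg]
      intro hk
      have hle : ((k:ℕ):ℝ) / (n:ℝ) ≤ 1 := by
        rcases eq_or_ne (n:ℝ) 0 with h | h
        · rw [h, div_zero]; norm_num
        · rw [div_le_one (lt_of_le_of_ne (Nat.cast_nonneg n) (Ne.symm h))]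
          exact_mod_cast Nat.cast_le.2 (Fin.is_le k)
      have := Real.sqrt_le_one.2 hle
      linarith
    rw [Finset.sum_eq_zero (fun k _ => this k)]
    exact hexppos
  -- main case
  set u : ℝ := Real.sqrt p with hudef
  set v : ℝ := Real.sqrt p + Real.sqrt c with hvdef
  have hu : 0 < u := Real.sqrt_pos.2 hp
  have huv : u < v := by rw [hudef, hvdef]; linarith
  have hu2 : u^2 = p := Real.sq_sqrt hp0
  have hvu : v - u = Real.sqrt c := by rw [hudef, hvdef]; ring
  have hvuc : (v-u)^2 = c := by rw [hvu]; exact Real.sq_sqrt hc.le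
  set a : ℝ := v^2 with hadef
  have ha0 : 0 < a := by positivity
  have hpa : p < a := by rw [hadef, ← hu2]; nlinarith
  have ha1 : a < 1 := by rw [hadef]; nlinarith
  have hp1' : p < 1 := hpa.trans ha1
  have h1a : 0 < 1 - a := by linarith
  have h1p : 0 < 1 - p := by linarith
  set L₁ : ℝ := Real.log a - Real.log p with hL₁
  set L₂ : ℝ := Real.log (1-a) - Real.log (1-p) with hL₂
  set lam : ℝ := L₁ - L₂ with hlamdef
  have hL₁pos : 0 < L₁ := by
    rw [hL₁]
    have := Real.log_lt_log hp hpa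
    linarith
  have hL₂neg : L₂ < 0 := by
    rw [hL₂]
    have := Real.log_lt_log h1a (by linarith : 1 - a < 1 - p)
    linarith
  have hlam : 0 < lam := by rw [hlamdef]; linarith
  set KL : ℝ := a * L₁ + (1-a) * L₂ with hKL
  have hKL2c : 2*c ≤ KL := by
    have h := okamoto_kl hu huv (by rw [hvdef]; exact hv1)
    rw [hu2] at h
    rw [hvuc] at h
    rw [hKL, hL₁, hL₂, hadef]
    linarith
  have hfnonneg : ∀ k : ℕ, 0 ≤ p^k * (1-p)^(n-k) * (n.choose k : ℝ) := fun k =>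
    mul_nonneg (mul_nonneg (pow_nonneg hp0 _) (pow_nonneg h1p.le _)) (Nat.cast_nonneg _)
  -- strict Chernoff bound
  have hstrict : (∑ k : Fin (n+1), if Real.sqrt p + Real.sqrt c < Real.sqrt ((k:ℕ) / n)
        then p^(k:ℕ) * (1-p)^(n-(k:ℕ)) * (n.choose (k:ℕ)) else 0)
      < ∑ k : Fin (n+1), p^(k:ℕ) * (1-p)^(n-(k:ℕ)) * (n.choose (k:ℕ))
          * Real.exp (lam * ((k:ℕ) - n*a)) := by
    apply Finset.sum_lt_sum
    · intro k _
      split_ifs with hk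
      · have hka : a < ((k:ℕ):ℝ) / (n:ℝ) := by
          rw [hadef]
          exact (Real.lt_sqrt hv0.le).1 hk
        have hn0 : (0:ℝ) < n := by
          rcases eq_or_ne (n:ℝ) 0 with h | h
          · rw [h, div_zero] at hka; linarith
          · exact lt_of_le_of_ne (Nat.cast_nonneg n) (Ne.symm h)
        have hkna : (n:ℝ) * a < ((k:ℕ):ℝ) := by
          rw [lt_div_iff₀ hn0] at hka
          linarith
        have hexp1 : 1 ≤ Real.exp (lam * ((k:ℕ) - n*a)) := by
          apply Real.one_le_exp
          apply mul_nonneg hlam.le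
          linarith
        exact le_mul_of_one_le_right (hfnonneg _) hexp1
      · exact mul_nonneg (hfnonneg _) (Real.exp_pos _).le
    · refine ⟨0, Finset.mem_univ 0, ?_⟩
      rw [if_neg]
      · apply mul_pos
        apply mul_pos (mul_pos (pow_pos hp _) (pow_pos h1p _))
        · exact_mod_cast Nat.cast_pos.2 (Nat.choose_pos (Nat.zero_le n))
        · exact Real.exp_pos _
      · rw [Fin.val_zero]
        push_neg
        rw [Nat.cast_zero, zero_div, Real.sqrt_zero]
        exact hv0.le
  -- compute the Chernoff sum
  have hsum : (∑ k : Fin (n+1), p^(k:ℕ) * (1-p)^(n-(k:ℕ)) * (n.choose (k:ℕ))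
          * Real.exp (lam * ((k:ℕ) - n*a)))
      = (Real.exp (-(lam*a)) * (p * Real.exp lam + (1-p)))^n := by
    rw [Fin.sum_univ_eq_sum_range (fun k => p^k * (1-p)^(n-k) * (n.choose k)
          * Real.exp (lam * ((k:ℕ) - n*a)))]
    have hterm : ∀ k ∈ Finset.range (n+1),
        p^k * (1-p)^(n-k) * (n.choose k : ℝ) * Real.exp (lam * ((k:ℕ) - n*a))
        = ((p * Real.exp lam)^k * (1-p)^(n-k) * (n.choose k : ℝ)) * (Real.exp (-(lam*a)))^n := by
      intro k _
      have e1 : lam * ((k:ℕ) - n*a) = (k:ℕ) * lam + (n:ℕ) * (-(lam*a)) := by push_cast; ring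
      rw [e1, Real.exp_add, Real.exp_nat_mul, Real.exp_nat_mul, mul_pow]
      ring
    rw [Finset.sum_congr rfl hterm, ← Finset.sum_mul, ← add_pow, ← mul_pow]
    ring
  -- identify with exp(-KL)
  have hexplam : Real.exp lam = (a/p) * ((1-p)/(1-a)) := by
    rw [hlamdef, hL₁, hL₂, Real.exp_sub, Real.exp_sub, Real.exp_sub,
      Real.exp_log ha0, Real.exp_log hp, Real.exp_log h1a, Real.exp_log h1p]
    field_simp
  have hfactor : Real.exp (-(lam*a)) * (p * Real.exp lam + (1-p)) = Real.exp (-KL) := by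
    have e2 : p * Real.exp lam + (1-p) = (1-p)/(1-a) := by
      rw [hexplam]
      field_simp
      ring
    have e3 : (1-p)/(1-a) = Real.exp (-L₂) := by
      rw [hL₂, neg_sub, Real.exp_sub, Real.exp_log h1a, Real.exp_log h1p]
    rw [e2, e3, ← Real.exp_add]
    congr 1
    rw [hKL, hlamdef]
    ring
  rw [hsum, hfactor, ← Real.exp_nat_mul] at hstrict
  apply hstrict.trans_le
  apply Real.exp_le_exp.2
  have : 2 * c * (n:ℝ) ≤ KL * n := by
    apply mul_le_mul_of_nonneg_right _ (Nat.cast_nonneg n)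
    linarith
  nlinarith [this]
end
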